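/- Let a₁, a₂ be linearly independent vectors in ℝ². For any integers ℓ₁, ℓ₂ with |ℓ₂| ≥ 2, there exists an integer ℓ such that the point ℓ·a₁ + sgn(ℓ₂)·a₂ belongs to the closed triangle with vertices 0, a₁, and ℓ₁·a₁ + ℓ₂·a₂. -/

import Mathlib

open Set

/-- For linearly independent `a₁, a₂` in `ℝ²` and integers `ℓ₁, ℓ₂` with `|ℓ₂| ≥ 2`,
there is an integer `ℓ` such that `ℓ•a₁ + sgn(ℓ₂)•a₂` lies in the closed triangle
with vertices `0`, `a₁` and `ℓ₁•a₁ + ℓ₂•a₂`. -/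
theorem stmt0 (a₁ a₂ : EuclideanSpace ℝ (Fin 2))
    (h : LinearIndependent ℝ ![a₁, a₂])
    (ℓ₁ ℓ₂ : ℤ) (hℓ₂ : 2 ≤ |ℓ₂|) :
    ∃ ℓ : ℤ, (ℓ : ℝ) • a₁ + (Int.sign ℓ₂ : ℝ) • a₂ ∈
      convexHull ℝ {0, a₁, (ℓ₁ : ℝ) • a₁ + (ℓ₂ : ℝ) • a₂} := by
  set n : ℤ := |ℓ₂| with hn
  have hnpos : (0:ℤ) < n := by omega
  set ℓ : ℤ := (ℓ₁ + n - 1) / n with hℓdef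
  refine ⟨ℓ, ?_⟩
  have hbounds : ℓ₁ ≤ n * ℓ ∧ n * ℓ ≤ ℓ₁ + n - 1 := by
    rw [hℓdef]
    have h1 := Int.mul_ediv_add_emod (ℓ₁ + n - 1) n
    have h2 := Int.emod_nonneg (ℓ₁ + n - 1) (by omega : n ≠ 0)
    have h3 := Int.emod_lt_of_pos (ℓ₁ + n - 1) hnpos
    omega
  have hnR : (0:ℝ) < (n:ℝ) := by exact_mod_cast hnpos
  set p : EuclideanSpace ℝ (Fin 2) := (ℓ₁ : ℝ) • a₁ + (ℓ₂ : ℝ) • a₂ with hp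
  set γ : ℝ := 1 / (n:ℝ) with hγdef
  set β : ℝ := (ℓ:ℝ) - (ℓ₁:ℝ) / (n:ℝ) with hβdef
  have hγpos : 0 < γ := by positivity
  have h1R : (ℓ₁:ℝ) ≤ (n:ℝ) * (ℓ:ℝ) := by exact_mod_cast hbounds.1
  have h2R : (n:ℝ) * (ℓ:ℝ) ≤ (ℓ₁:ℝ) + n - 1 := by exact_mod_cast hbounds.2
  have hβ0 : 0 ≤ β := by
    rw [hβdef, sub_nonneg, div_le_iff₀ hnR]
    nlinarith
  have hsum : β + γ ≤ 1 := by
    have heq : β + γ = ((n:ℝ) * ℓ - ℓ₁ + 1) / n := by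
      rw [hβdef, hγdef]; field_simp
    rw [heq, div_le_one hnR]; linarith
  -- scalar identities
  have hβγ : β + γ * (ℓ₁:ℝ) = (ℓ:ℝ) := by
    rw [hβdef, hγdef]; field_simp; ring
  have hsign : γ * (ℓ₂:ℝ) = (Int.sign ℓ₂ : ℝ) := by
    have habs : (Int.sign ℓ₂ : ℤ) * n = ℓ₂ := by
      rw [hn]; exact Int.sign_mul_abs ℓ₂
    have : ((Int.sign ℓ₂ : ℝ)) * (n:ℝ) = (ℓ₂:ℝ) := by exact_mod_cast habs
    rw [hγdef]; field_simp; linarith [this]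
  have key : (ℓ : ℝ) • a₁ + (Int.sign ℓ₂ : ℝ) • a₂ = β • a₁ + γ • p := by
    rw [hp, ← hβγ, ← hsign]
    module
  rw [key]
  -- membership
  have hs : Convex ℝ (convexHull ℝ ({0, a₁, p} : Set (EuclideanSpace ℝ (Fin 2)))) :=
    convex_convexHull ℝ _
  have h0 : (0 : EuclideanSpace ℝ (Fin 2)) ∈ convexHull ℝ ({0, a₁, p} : Set _) :=
    subset_convexHull ℝ _ (by simp)
  have h1 : a₁ ∈ convexHull ℝ ({0, a₁, p} : Set _) :=
    subset_convexHull ℝ _ (by simp)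
  have hpm : p ∈ convexHull ℝ ({0, a₁, p} : Set _) :=
    subset_convexHull ℝ _ (by simp)
  have hc : 0 < β + γ := by linarith
  have hq : (β/(β+γ)) • a₁ + (γ/(β+γ)) • p ∈ convexHull ℝ ({0, a₁, p} : Set _) :=
    hs h1 hpm (by positivity) (by positivity) (by field_simp)
  have hfin := hs h0 hq (by linarith : (0:ℝ) ≤ 1 - (β+γ)) (le_of_lt hc) (by ring)
  have : (1 - (β+γ)) • (0 : EuclideanSpace ℝ (Fin 2)) +
      (β+γ) • ((β/(β+γ)) • a₁ + (γ/(β+γ)) • p) = β • a₁ + γ • p := by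
    rw [smul_zero, zero_add, smul_add, smul_smul, smul_smul,
      mul_div_cancel₀ _ (ne_of_gt hc), mul_div_cancel₀ _ (ne_of_gt hc)]
  rw [← this]
  exact hfin
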